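/- Let ν be real and let n be a nonnegative integer. Then the function φ_0(z) = z^n (1−|z|²)^ν on the open unit disk D satisfies 𝔏_ν φ_0 = ν φ_0 on D. -/

import Mathlib

open MeasureTheory

/-- Wirtinger derivative `∂f/∂z = ½(∂f/∂x − i ∂f/∂y)`. -/
noncomputable def wirtZ (f : ℂ → ℂ) (z : ℂ) : ℂ :=
  (1 / 2 : ℂ) * (fderiv ℝ f z 1 - Complex.I * fderiv ℝ f z Complex.I)

/-- Wirtinger derivative `∂f/∂z̄ = ½(∂f/∂x + i ∂f/∂y)`. -/
noncomputable def wirtZbar (f : ℂ → ℂ) (z : ℂ) : ℂ :=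
  (1 / 2 : ℂ) * (fderiv ℝ f z 1 + Complex.I * fderiv ℝ f z Complex.I)

/-- The first order operator `∇_α f = −(1−|z|²) ∂f/∂z + α z̄ f`. -/
noncomputable def nablaOp (α : ℝ) (f : ℂ → ℂ) (z : ℂ) : ℂ :=
  -(((1 - ‖z‖ ^ 2 : ℝ)) : ℂ) * wirtZ f z + (α : ℂ) * (starRingEnd ℂ z) * f z

/-- The formal adjoint `∇_α^* f = (1−|z|²) ∂f/∂z̄ + (α+1) z f`. -/
noncomputable def nablaStar (α : ℝ) (f : ℂ → ℂ) (z : ℂ) : ℂ :=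
  (((1 - ‖z‖ ^ 2 : ℝ)) : ℂ) * wirtZbar f z + ((α : ℂ) + 1) * z * f z

/-- The magnetic Laplacian `L_ν`. -/
noncomputable def magL (ν : ℝ) (f : ℂ → ℂ) (z : ℂ) : ℂ :=
  -(((1 - ‖z‖ ^ 2 : ℝ)) : ℂ) ^ 2 * wirtZ (wirtZbar f) z
    - (ν : ℂ) * (((1 - ‖z‖ ^ 2 : ℝ)) : ℂ) *
        (z * wirtZ f z - (starRingEnd ℂ z) * wirtZbar f z)
    + (ν : ℂ) ^ 2 * ((‖z‖ ^ 2 : ℝ) : ℂ) * f z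

section AuxWirtinger
open Complex

lemma hasFDerivAt_normSq' (z : ℂ) : HasFDerivAt Complex.normSq
    ((2*z.re) • Complex.reCLM + (2*z.im) • Complex.imCLM) z := by
  have h1 := (hasDerivAt_pow 2 z.re).comp_hasFDerivAt z Complex.reCLM.hasFDerivAt
  have h2 := (hasDerivAt_pow 2 z.im).comp_hasFDerivAt z Complex.imCLM.hasFDerivAt
  have h := h1.add h2
  have e : Complex.normSq = fun w : ℂ => w.re ^ 2 + w.im ^ 2 := by
    ext w; simp [Complex.normSq_apply]; ring
  rw [e]
  exact h.congr_fderiv (by ext w <;> simp)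

/-- The basic family of functions `c z^m (1−|z|²)^s`. -/
noncomputable def phi (c : ℂ) (m : ℕ) (s : ℝ) : ℂ → ℂ :=
  fun w => c * w ^ m * (((1 - Complex.normSq w) ^ s : ℝ) : ℂ)

lemma phi_hasFDerivAt (c : ℂ) (m : ℕ) (s : ℝ) (z : ℂ) (hz : Complex.normSq z < 1) :
    ∃ L : ℂ →L[ℝ] ℂ, HasFDerivAt (phi c m s) L z ∧
      L 1 = c * m * z ^ (m-1) * (((1 - Complex.normSq z) ^ s : ℝ) : ℂ)
          - c * s * z ^ m * (2*z.re) * (((1 - Complex.normSq z) ^ (s-1) : ℝ) : ℂ) ∧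
      L Complex.I = c * m * z ^ (m-1) * Complex.I * (((1 - Complex.normSq z) ^ s : ℝ) : ℂ)
          - c * s * z ^ m * (2*z.im) * (((1 - Complex.normSq z) ^ (s-1) : ℝ) : ℂ) := by
  have hq : (0:ℝ) < 1 - Complex.normSq z := by linarith
  have hns := hasFDerivAt_normSq' z
  have hQ : HasFDerivAt (fun w : ℂ => 1 - Complex.normSq w)
      (-((2*z.re) • Complex.reCLM + (2*z.im) • Complex.imCLM)) z := by
    exact ((hasFDerivAt_const (1:ℝ) z).sub hns).congr_fderiv (by simp)
  have hr := (Real.hasDerivAt_rpow_const (x := 1 - Complex.normSq z) (p := s)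
      (Or.inl hq.ne')).comp_hasFDerivAt z hQ
  have hR := Complex.ofRealCLM.hasFDerivAt.comp z hr
  have hP := ((hasDerivAt_pow m z).const_mul c).hasFDerivAt.restrictScalars ℝ
  have hF := hP.mul hR
  refine ⟨_, hF, ?_, ?_⟩ <;>
  · simp [phi, ContinuousLinearMap.smul_apply, smul_eq_mul, Complex.real_smul]
    ring

lemma wirtZ_phi (c : ℂ) (m : ℕ) (s : ℝ) (z : ℂ) (hz : Complex.normSq z < 1) :
    wirtZ (phi c m s) z = c * m * z ^ (m-1) * (((1 - Complex.normSq z) ^ s : ℝ) : ℂ)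
      - c * s * z ^ m * (starRingEnd ℂ z) * (((1 - Complex.normSq z) ^ (s-1) : ℝ) : ℂ) := by
  obtain ⟨L, hF, h1, hI⟩ := phi_hasFDerivAt c m s z hz
  have hc : (starRingEnd ℂ) z = (z.re : ℂ) - z.im * Complex.I := by
    simp [Complex.ext_iff]
  rw [wirtZ, hF.fderiv, h1, hI]
  linear_combination (-(c * m * z^(m-1) * (((1 - Complex.normSq z) ^ s : ℝ) : ℂ))/2) * Complex.I_sq
    + (c * s * z^m * (((1 - Complex.normSq z) ^ (s-1) : ℝ) : ℂ)) * hc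

lemma wirtZbar_phi (c : ℂ) (m : ℕ) (s : ℝ) (z : ℂ) (hz : Complex.normSq z < 1) :
    wirtZbar (phi c m s) z
      = -(c * s) * z ^ (m+1) * (((1 - Complex.normSq z) ^ (s-1) : ℝ) : ℂ) := by
  obtain ⟨L, hF, h1, hI⟩ := phi_hasFDerivAt c m s z hz
  have hc : z = (z.re : ℂ) + z.im * Complex.I := (Complex.re_add_im z).symm
  rw [wirtZbar, hF.fderiv, h1, hI]
  linear_combination ((c * m * z^(m-1) * (((1 - Complex.normSq z) ^ s : ℝ) : ℂ))/2) * Complex.I_sq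
    + (c * s * z^m * (((1 - Complex.normSq z) ^ (s-1) : ℝ) : ℂ)) * hc

lemma wirtZ_congr {f g : ℂ → ℂ} {z : ℂ} (h : f =ᶠ[nhds z] g) : wirtZ f z = wirtZ g z := by
  rw [wirtZ, wirtZ, h.fderiv_eq]

end AuxWirtinger

theorem magL_ground_state (ν : ℝ) (n : ℕ) :
    ∀ z ∈ Metric.ball (0 : ℂ) 1,
      magL ν (fun w => w ^ n * (((1 - ‖w‖ ^ 2) ^ ν : ℝ) : ℂ)) z
        = (ν : ℂ) * (z ^ n * (((1 - ‖z‖ ^ 2) ^ ν : ℝ) : ℂ)) := by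
  have hball : ∀ w : ℂ, w ∈ Metric.ball (0 : ℂ) 1 → Complex.normSq w < 1 := by
    intro w hw
    rw [mem_ball_zero_iff] at hw
    rw [Complex.normSq_eq_norm_sq]
    nlinarith [norm_nonneg w, hw]
  intro z hz
  have hz1 := hball z hz
  have hQpos : (0:ℝ) < 1 - Complex.normSq z := by linarith
  have hf : (fun w => w ^ n * (((1 - ‖w‖ ^ 2) ^ ν : ℝ) : ℂ)) = phi 1 n ν := by
    funext w; simp [phi, Complex.sq_norm]
  rw [hf, magL]
  simp only [Complex.sq_norm]
  have hev : wirtZbar (phi 1 n ν) =ᶠ[nhds z] phi (-((1:ℂ) * ν)) (n+1) (ν-1) := by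
    filter_upwards [Metric.isOpen_ball.mem_nhds hz] with w hw
    rw [wirtZbar_phi _ _ _ _ (hball w hw)]; rfl
  rw [wirtZ_congr hev, wirtZ_phi _ _ _ _ hz1, wirtZ_phi _ _ _ _ hz1,
    wirtZbar_phi _ _ _ _ hz1]
  set q : ℝ := 1 - Complex.normSq z with hqdef
  have e3 : ν - 1 - 1 = ν - 2 := by ring
  rw [e3]
  have e1 : ((q ^ ν : ℝ) : ℂ) = ((q ^ (ν-2) : ℝ) : ℂ) * ((q : ℝ) : ℂ) ^ 2 := by
    rw [show ν = (ν-2) + 2 by ring, Real.rpow_add hQpos]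
    push_cast [Real.rpow_natCast q 2]
    norm_num
  have e2 : ((q ^ (ν-1) : ℝ) : ℂ) = ((q ^ (ν-2) : ℝ) : ℂ) * ((q : ℝ) : ℂ) := by
    rw [show ν - 1 = (ν-2) + 1 by ring, Real.rpow_add hQpos, Real.rpow_one]
    push_cast; ring
  rw [e1, e2]
  simp only [Nat.add_sub_cancel]
  have hzw : z * (starRingEnd ℂ) z = 1 - ((q:ℝ):ℂ) := by
    rw [Complex.mul_conj]; rw [hqdef]; push_cast; ring
  have hNc : ((Complex.normSq z : ℝ) : ℂ) = 1 - ((q:ℝ):ℂ) := by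
    rw [hqdef]; push_cast; ring
  rw [hNc]
  have hn : (n:ℂ) * z ^ (n-1) * z = (n:ℂ) * z ^ n := by
    cases n with
    | zero => simp
    | succ k => rw [Nat.add_sub_cancel, pow_succ]; push_cast; ring
  set t : ℂ := ((q ^ (ν-2) : ℝ) : ℂ)
  set u : ℂ := ((q:ℝ):ℂ)
  rw [phi]
  simp only [← hqdef, e1]
  linear_combination (norm := (push_cast; ring))
    (-(ν:ℂ) * ((ν:ℂ) - 1) * t * u^2 * z^n) * hzw + (-(ν:ℂ) * t * u^3) * hn
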